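/- Let w : [0,∞) → ℝ be a nonnegative C² function with w(0)=1, w'(0)=0, satisfying w'' ≤ 2a w' + (1+b) w, where a,b > 0. Then w(s) ≤ e^((a+c)s) for all s ≥ 0, where c = √(1+b+a²). -/

import Mathlib

lemma anti_aux (f f' : ℝ → ℝ) (hd : ∀ s ∈ Set.Ici (0:ℝ), HasDerivAt f (f' s) s)
    (hle : ∀ s ∈ Set.Ici (0:ℝ), f' s ≤ 0) : AntitoneOn f (Set.Ici 0) := by
  have hint : interior (Set.Ici (0:ℝ)) = Set.Ioi 0 := interior_Ici
  apply antitoneOn_of_deriv_nonpos (convex_Ici 0)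
  · exact fun x hx => (hd x hx).continuousAt.continuousWithinAt
  · rw [hint]
    exact fun x hx => (hd x (Set.mem_Ici.mpr (le_of_lt hx))).differentiableAt.differentiableWithinAt
  · rw [hint]
    intro x hx
    rw [(hd x (Set.mem_Ici.mpr (le_of_lt hx))).deriv]
    exact hle x (Set.mem_Ici.mpr (le_of_lt hx))

theorem stmt_6 (a b : ℝ) (ha : 0 < a) (hb : 0 < b)
    (w w' w'' : ℝ → ℝ)
    (hpos : ∀ s : ℝ, 0 ≤ s → 0 ≤ w s)
    (hd1 : ∀ s : ℝ, 0 ≤ s → HasDerivAt w (w' s) s)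
    (hd2 : ∀ s : ℝ, 0 ≤ s → HasDerivAt w' (w'' s) s)
    (h0 : w 0 = 1) (h0' : w' 0 = 0)
    (hineq : ∀ s : ℝ, 0 ≤ s → w'' s ≤ 2 * a * w' s + (1 + b) * w s) :
    ∀ s : ℝ, 0 ≤ s →
      w s ≤ Real.exp ((a + Real.sqrt (1 + b + a ^ 2)) * s) := by
  intro s hs
  set c := Real.sqrt (1 + b + a ^ 2) with hcdef
  have hcsq : c ^ 2 = 1 + b + a ^ 2 := Real.sq_sqrt (by nlinarith)
  have hc0 : 0 ≤ c := Real.sqrt_nonneg _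
  have hca : a < c := by nlinarith
  -- Step 1: Grönwall for g = w' - (a-c) w
  have hg : ∀ t : ℝ, 0 ≤ t → w' t - (a - c) * w t ≤ (c - a) * Real.exp ((a + c) * t) := by
    intro t ht
    have hanti : AntitoneOn
        (fun u => (w' u - (a - c) * w u) * Real.exp (-((a + c) * u))) (Set.Ici 0) := by
      apply anti_aux _ (fun u => (w'' u - (a - c) * w' u) * Real.exp (-((a + c) * u))
          + (w' u - (a - c) * w u) * (Real.exp (-((a + c) * u)) * (-(a + c))))
      · intro u hu
        have h1 : HasDerivAt (fun u => w' u - (a - c) * w u)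
            (w'' u - (a - c) * w' u) u := (hd2 u hu).sub ((hd1 u hu).const_mul (a - c))
        have h2 : HasDerivAt (fun u : ℝ => Real.exp (-((a + c) * u)))
            (Real.exp (-((a + c) * u)) * (-(a + c))) u := by
          have h3 : HasDerivAt (fun u : ℝ => -((a + c) * u)) (-(a + c)) u := by
            simpa [Pi.neg_def] using ((hasDerivAt_id u).const_mul (a + c)).neg
          exact h3.exp
        exact h1.mul h2
      · intro u hu
        have hE : 0 < Real.exp (-((a + c) * u)) := Real.exp_pos _
        have hi := hineq u hu
        have heq : (w'' u - (a - c) * w' u) * Real.exp (-((a + c) * u))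
            + (w' u - (a - c) * w u) * (Real.exp (-((a + c) * u)) * (-(a + c)))
            = (w'' u - 2 * a * w' u + (a ^ 2 - c ^ 2) * w u) *
              Real.exp (-((a + c) * u)) := by ring
        have hac : a ^ 2 - c ^ 2 = -(1 + b) := by linarith
        rw [heq, hac]
        nlinarith [mul_le_mul_of_nonneg_right
          (show w'' u - 2 * a * w' u + -(1 + b) * w u ≤ 0 by linarith)
          hE.le]
    have hmono := hanti (Set.self_mem_Ici) ht ht
    simp only [h0, h0', mul_zero, neg_zero, Real.exp_zero, mul_one, zero_sub] at hmono
    have hE : 0 < Real.exp ((a + c) * t) := Real.exp_pos _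
    have hEinv : Real.exp (-((a + c) * t)) = (Real.exp ((a + c) * t))⁻¹ := Real.exp_neg _
    rw [hEinv] at hmono
    rw [mul_inv_le_iff₀ hE] at hmono
    nlinarith
  -- Step 2: w - exp((a+c)s) is antitone
  have hanti2 : AntitoneOn (fun u => w u - Real.exp ((a + c) * u)) (Set.Ici 0) := by
    apply anti_aux _ (fun u => w' u - Real.exp ((a + c) * u) * (a + c))
    · intro u hu
      have h2 : HasDerivAt (fun u : ℝ => Real.exp ((a + c) * u))
          (Real.exp ((a + c) * u) * (a + c)) u := by
        have h3 : HasDerivAt (fun u : ℝ => (a + c) * u) (a + c) u := by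
          simpa using (hasDerivAt_id u).const_mul (a + c)
        exact h3.exp
      exact (hd1 u hu).sub h2
    · intro u hu
      have hE : 0 < Real.exp ((a + c) * u) := Real.exp_pos _
      have h1 := hg u hu
      have h2 := hpos u hu
      nlinarith
  have := hanti2 Set.self_mem_Ici hs hs
  simp only [h0, mul_zero, Real.exp_zero, sub_self] at this
  linarith
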